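/- Let P be a linear endomorphism of ℝ^{2N} that is both orthogonal and symplectic, and let K = ker(P − id). Then for every subspace L ⊆ ℝ^{2N}, dim (P − id)⁻¹(L) = dim K + dim(L ∩ K^⊥), where (P − id)⁻¹(L) denotes the preimage subspace and K^⊥ is the ω-orthogonal complement of K. -/

import Mathlib

open Matrix

/-- The ω-orthogonal complement of a subspace `K` of `ℝ^{2N}`, where
`ω(x, y) = ⟨J x, y⟩` with `J` the standard complex structure. -/
def omegaPerp (N : ℕ) (K : Submodule ℝ ((Fin N ⊕ Fin N) → ℝ)) :
    Submodule ℝ ((Fin N ⊕ Fin N) → ℝ) where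
  carrier := {x | ∀ w ∈ K, (Matrix.J (Fin N) ℝ).mulVec x ⬝ᵥ w = 0}
  add_mem' := by
    intro a b ha hb w hw
    simp [Matrix.mulVec_add, add_dotProduct, ha w hw, hb w hw]
  zero_mem' := by
    intro w hw
    simp
  smul_mem' := by
    intro c a ha w hw
    simp [Matrix.mulVec_smul, smul_dotProduct, ha w hw]

set_option maxHeartbeats 1000000 in
set_option synthInstance.maxHeartbeats 200000 in
/-- Let `P` be a linear endomorphism of `ℝ^{2N}` that is both orthogonal
and symplectic, and let `K = ker (P − id)`. Then for every subspace `L ⊆ ℝ^{2N}`,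
`dim (P − id)⁻¹(L) = dim K + dim (L ∩ K^⊥)`. -/
theorem dim_preimage_orthogonal_symplectic
    (N : ℕ) (P : Matrix (Fin N ⊕ Fin N) (Fin N ⊕ Fin N) ℝ)
    (horth : ∀ x y : (Fin N ⊕ Fin N) → ℝ, P.mulVec x ⬝ᵥ P.mulVec y = x ⬝ᵥ y)
    (hsympl : ∀ x y : (Fin N ⊕ Fin N) → ℝ,
      (Matrix.J (Fin N) ℝ).mulVec (P.mulVec x) ⬝ᵥ P.mulVec y
        = (Matrix.J (Fin N) ℝ).mulVec x ⬝ᵥ y)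
    (K : Submodule ℝ ((Fin N ⊕ Fin N) → ℝ))
    (hK : K = LinearMap.ker (P.mulVecLin - LinearMap.id))
    (L : Submodule ℝ ((Fin N ⊕ Fin N) → ℝ)) :
    Module.finrank ℝ ↥(Submodule.comap (P.mulVecLin - LinearMap.id) L)
      = Module.finrank ℝ ↥K + Module.finrank ℝ ↥(L ⊓ omegaPerp N K) := by
  set Jm := Matrix.J (Fin N) ℝ with hJm
  have homem : ∀ x, x ∈ omegaPerp N K ↔ ∀ w ∈ K, Jm.mulVec x ⬝ᵥ w = 0 :=
    fun x => Iff.rfl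
  set f := P.mulVecLin - LinearMap.id with hf
  have hfapp : ∀ x, f x = P.mulVec x - x := fun x => rfl
  have hJJ : ∀ x : (Fin N ⊕ Fin N) → ℝ, Jm.mulVec (Jm.mulVec x) = -x := by
    intro x
    rw [Matrix.mulVec_mulVec, Matrix.J_squared, Matrix.neg_mulVec, Matrix.one_mulVec]
  have hKmem : ∀ x, x ∈ K ↔ P.mulVec x = x := by
    intro x
    rw [hK]
    simp only [LinearMap.mem_ker]
    rw [hfapp x, sub_eq_zero]
  have hPinj : Function.Injective P.mulVecLin := by
    rw [← LinearMap.ker_eq_bot]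
    rw [Submodule.eq_bot_iff]
    intro x hx
    have hx0 : P.mulVec x = 0 := hx
    have h2 := horth x x
    rw [hx0] at h2
    simp only [zero_dotProduct] at h2
    exact dotProduct_self_eq_zero.mp h2.symm
  have hPsurj : Function.Surjective P.mulVecLin :=
    (LinearMap.injective_iff_surjective).mp hPinj
  have hcomm : ∀ x, P.mulVec (Jm.mulVec x) = Jm.mulVec (P.mulVec x) := by
    intro x
    have key : ∀ z, (P.mulVec (Jm.mulVec x) - Jm.mulVec (P.mulVec x)) ⬝ᵥ z = 0 := by
      intro z
      obtain ⟨y, hy⟩ := hPsurj z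
      have hy' : P.mulVec y = z := hy
      rw [← hy', sub_dotProduct, horth (Jm.mulVec x) y, hsympl x y, sub_self]
    have h0 := dotProduct_self_eq_zero.mp
      (key (P.mulVec (Jm.mulVec x) - Jm.mulVec (P.mulVec x)))
    exact sub_eq_zero.mp h0
  have hKJ : ∀ w ∈ K, Jm.mulVec w ∈ K := by
    intro w hw
    rw [hKmem] at hw ⊢
    rw [hcomm w, hw]
  have hrange : LinearMap.range f ≤ omegaPerp N K := by
    rintro _ ⟨y, rfl⟩
    rw [homem]
    intro w hw
    rw [hfapp, Matrix.mulVec_sub, sub_dotProduct]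
    have h1 : Jm.mulVec (P.mulVec y) ⬝ᵥ w = Jm.mulVec y ⬝ᵥ w := by
      conv_lhs => rw [← (hKmem w).mp hw]
      exact hsympl y w
    rw [h1, sub_self]
  have hker : LinearMap.ker f = K := by rw [hK]
  have hdisj : K ⊓ LinearMap.range f = ⊥ := by
    rw [Submodule.eq_bot_iff]
    rintro x ⟨hxK, y, rfl⟩
    have hx : P.mulVec (f y) = f y := (hKmem _).mp hxK
    have h0 : f y ⬝ᵥ f y = 0 := by
      have := horth (f y) y
      calc f y ⬝ᵥ f y = f y ⬝ᵥ (P.mulVec y - y) := by rw [← hfapp]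
        _ = f y ⬝ᵥ P.mulVec y - f y ⬝ᵥ y := by rw [dotProduct_sub]
        _ = P.mulVec (f y) ⬝ᵥ P.mulVec y - f y ⬝ᵥ y := by rw [hx]
        _ = 0 := by rw [horth, sub_self]
    exact dotProduct_self_eq_zero.mp h0
  have hsup : K ⊔ LinearMap.range f = ⊤ := by
    apply Submodule.eq_top_of_finrank_eq
    have h1 := Submodule.finrank_sup_add_finrank_inf_eq K (LinearMap.range f)
    rw [hdisj] at h1
    simp only [finrank_bot, add_zero] at h1
    rw [h1, ← hker, add_comm]
    exact LinearMap.finrank_range_add_finrank_ker f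
  have hperp_le : omegaPerp N K ≤ LinearMap.range f := by
    intro x hx
    have hx' : x ∈ K ⊔ LinearMap.range f := by rw [hsup]; trivial
    obtain ⟨k, hk, r, hr, hkr⟩ := Submodule.mem_sup.mp hx'
    have hkperp : k ∈ omegaPerp N K := by
      have : k = x - r := by rw [← hkr]; ring
      rw [this]
      exact Submodule.sub_mem _ hx (hrange hr)
    have hk0 : k = 0 := by
      have h1 : Jm.mulVec k ⬝ᵥ Jm.mulVec k = 0 :=
        (homem k).mp hkperp (Jm.mulVec k) (hKJ k hk)
      have h2 : Jm.mulVec k = 0 := dotProduct_self_eq_zero.mp h1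
      have h3 := hJJ k
      rw [h2, Matrix.mulVec_zero] at h3
      exact neg_eq_zero.mp h3.symm
    rw [hk0, zero_add] at hkr
    rw [← hkr]
    exact hr
  have homega : omegaPerp N K = LinearMap.range f := le_antisymm hperp_le hrange
  -- final dimension count
  have hkerle : LinearMap.ker f ≤ Submodule.comap f L := by
    intro x hx
    simp only [Submodule.mem_comap, LinearMap.mem_ker.mp hx, Submodule.zero_mem]
  have hmain := LinearMap.finrank_range_add_finrank_ker (f.domRestrict (Submodule.comap f L))
  rw [LinearMap.ker_domRestrict] at hmain
  have hrg : LinearMap.range (f.domRestrict (Submodule.comap f L))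
      = Submodule.map f (Submodule.comap f L) := by
    rw [LinearMap.range_domRestrict]
  rw [hrg, Submodule.map_comap_eq] at hmain
  have hkeq : Module.finrank ℝ ↥(Submodule.comap (Submodule.comap f L).subtype (LinearMap.ker f))
      = Module.finrank ℝ ↥(LinearMap.ker f) :=
    (Submodule.comapSubtypeEquivOfLe hkerle).finrank_eq
  rw [hkeq] at hmain
  rw [homega, hker] at *
  rw [← hmain, inf_comm (LinearMap.range f) L, add_comm]
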